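/- Let (M, μ) be a measure space with 0 < μ(M) ≤ V < ∞, let n ≥ 2 be an integer, and let ε > 0. Let δ > 0 satisfy 3(n-1)δ/(4(1+δ)) ≤ ε, and let λ ≥ 1, A > 0, B > 0, K > 0. Suppose φ, ψ : M → ℝ are measurable functions such that ‖ψ‖_{L^{1+δ}(μ)} ≤ K·‖φ‖_{L^{1+δ}(μ)}, ‖φ‖_{L^∞(μ)} ≤ A·λ^{(n-1)/2}, and ‖φ‖_{L^1(μ)} ≥ B·λ^{-(n-1)/4}. Then ‖ψ‖_{L^1(μ)} ≤ V^{δ/(1+δ)} · K · (A/B)^{δ/(1+δ)} · λ^{ε} · ‖φ‖_{L^1(μ)}. -/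

import Mathlib

open MeasureTheory ENNReal

/-- Lemma 3.2 of the paper in abstract form: if `ψ` is bounded by `φ` in `L^(1+δ)` norm,
`φ` satisfies an `L^∞` upper bound of size `λ^((n-1)/2)` and an `L¹` lower bound of size
`λ^(-(n-1)/4)`, then the `L¹` norm of `ψ` is bounded by `C λ^ε` times the `L¹` norm of `φ`. -/
theorem l1_bound_of_lp_bound
    {M : Type*} [MeasurableSpace M] (μ : Measure M)
    (V : ℝ) (hμpos : 0 < μ Set.univ) (hμV : μ Set.univ ≤ ENNReal.ofReal V)
    (n : ℕ) (hn : 2 ≤ n) (ε δ lam A B K : ℝ) (hε : 0 < ε) (hδ : 0 < δ)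
    (hδε : 3 * ((n : ℝ) - 1) * δ / (4 * (1 + δ)) ≤ ε)
    (hlam : 1 ≤ lam) (hA : 0 < A) (hB : 0 < B) (hK : 0 < K)
    (φ ψ : M → ℝ) (hφ : Measurable φ) (hψ : Measurable ψ)
    (hψφ : eLpNorm ψ (ENNReal.ofReal (1 + δ)) μ ≤
      ENNReal.ofReal K * eLpNorm φ (ENNReal.ofReal (1 + δ)) μ)
    (hLinfty : eLpNorm φ ⊤ μ ≤ ENNReal.ofReal (A * lam ^ (((n : ℝ) - 1) / 2)))
    (hL1 : ENNReal.ofReal (B * lam ^ (-((n : ℝ) - 1) / 4)) ≤ eLpNorm φ 1 μ) :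
    eLpNorm ψ 1 μ ≤
      ENNReal.ofReal (V ^ (δ / (1 + δ)) * K * (A / B) ^ (δ / (1 + δ)) * lam ^ ε)
        * eLpNorm φ 1 μ := by
  have h1δ : (0:ℝ) < 1 + δ := by linarith
  have hlam0 : (0:ℝ) < lam := lt_of_lt_of_le one_pos hlam
  set θ : ℝ := δ / (1 + δ) with hθdef
  have hθ0 : (0:ℝ) ≤ θ := by positivity
  set p : ℝ≥0∞ := ENNReal.ofReal (1 + δ) with hp
  have hpt : p.toReal = 1 + δ := ENNReal.toReal_ofReal h1δ.le
  have hp0 : p ≠ 0 := by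
    simp only [hp, Ne, ENNReal.ofReal_eq_zero, not_le]; linarith
  have hpT : p ≠ ∞ := ENNReal.ofReal_ne_top
  have hp1 : (1:ℝ≥0∞) ≤ p := by
    rw [hp, ← ENNReal.ofReal_one]
    exact ENNReal.ofReal_le_ofReal (by linarith)
  have hb : (0:ℝ) < B * lam ^ (-((n:ℝ)-1)/4) := by positivity
  have ha : (0:ℝ) < A * lam ^ (((n:ℝ)-1)/2) := by positivity
  have hV : (0:ℝ) < V := by
    by_contra h
    push_neg at h
    rw [ENNReal.ofReal_eq_zero.2 h] at hμV
    exact absurd (le_antisymm hμV zero_le).symm hμpos.ne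
  set L := eLpNorm φ 1 μ with hL
  have hLpos : 0 < L := lt_of_lt_of_le (ENNReal.ofReal_pos.2 hb) hL1
  have hμfin : μ Set.univ ≠ ∞ := (hμV.trans_lt ENNReal.ofReal_lt_top).ne
  have hE : eLpNormEssSup φ μ ≤ ENNReal.ofReal (A * lam ^ (((n:ℝ)-1)/2)) := by
    simpa [eLpNorm_exponent_top] using hLinfty
  have hEfin : eLpNormEssSup φ μ ≠ ∞ := (hE.trans_lt ENNReal.ofReal_lt_top).ne
  have hLfin : L ≠ ∞ := by
    refine ((eLpNorm_le_eLpNorm_mul_rpow_measure_univ (p := 1) (q := ∞) le_top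
      hφ.aestronglyMeasurable).trans_lt ?_).ne
    rw [eLpNorm_exponent_top]
    exact ENNReal.mul_lt_top hEfin.lt_top
      (ENNReal.rpow_lt_top_of_nonneg (by norm_num) hμfin)
  -- interpolation: ∫ |φ|^(1+δ) ≤ (essSup)^δ * ∫ |φ|
  have key : ∫⁻ x, (‖φ x‖₊ : ℝ≥0∞) ^ (1+δ) ∂μ ≤ (eLpNormEssSup φ μ)^δ * L := by
    rw [hL, eLpNorm_one_eq_lintegral_enorm,
      ← lintegral_const_mul' _ _ (ENNReal.rpow_ne_top_of_nonneg hδ.le hEfin)]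
    refine lintegral_mono_ae ?_
    filter_upwards [enorm_ae_le_eLpNormEssSup φ μ] with x hx
    rcases eq_or_ne ((‖φ x‖₊ : ℝ≥0∞)) 0 with h0 | h0
    · rw [h0, ENNReal.zero_rpow_of_pos (by linarith)]
      exact zero_le
    · calc (‖φ x‖₊ : ℝ≥0∞) ^ (1+δ)
          = (‖φ x‖₊ : ℝ≥0∞) ^ δ * (‖φ x‖₊ : ℝ≥0∞) := by
            rw [add_comm, ENNReal.rpow_add _ _ h0 ENNReal.coe_ne_top, ENNReal.rpow_one]
        _ ≤ (eLpNormEssSup φ μ)^δ * (‖φ x‖₊ : ℝ≥0∞) := by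
            gcongr
            exact hx
  have hφp : eLpNorm φ p μ ≤ (eLpNormEssSup φ μ)^θ * L^(1/(1+δ)) := by
    rw [eLpNorm_eq_lintegral_rpow_enorm_toReal hp0 hpT, hpt]
    calc (∫⁻ x, (‖φ x‖₊ : ℝ≥0∞) ^ (1+δ) ∂μ) ^ (1/(1+δ))
        ≤ ((eLpNormEssSup φ μ)^δ * L) ^ (1/(1+δ)) :=
          ENNReal.rpow_le_rpow key (by positivity)
      _ = (eLpNormEssSup φ μ)^θ * L^(1/(1+δ)) := by
          rw [ENNReal.mul_rpow_of_nonneg _ _ (by positivity), ← ENNReal.rpow_mul]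
          congr 2
          rw [hθdef]
          field_simp
  have hLsplit : L^(1/(1+δ)) ≤
      L * (ENNReal.ofReal (B * lam ^ (-((n:ℝ)-1)/4)))^(-θ) := by
    have hsplit : L^(1/(1+δ)) = L * L^(-θ) := by
      have hexp : (1:ℝ)/(1+δ) = 1 + -θ := by rw [hθdef]; field_simp; ring
      rw [hexp, ENNReal.rpow_add _ _ hLpos.ne' hLfin, ENNReal.rpow_one]
    rw [hsplit]
    refine mul_le_mul_right ?_ _
    rw [ENNReal.rpow_neg, ENNReal.rpow_neg]
    exact ENNReal.inv_le_inv.2 (ENNReal.rpow_le_rpow hL1 hθ0)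
  have hstep1 : eLpNorm ψ 1 μ ≤ eLpNorm ψ p μ * μ Set.univ ^ θ := by
    have h := eLpNorm_le_eLpNorm_mul_rpow_measure_univ (μ := μ) (p := 1) (q := p) hp1
      hψ.aestronglyMeasurable
    have hexp : 1/(1:ℝ≥0∞).toReal - 1/p.toReal = θ := by
      rw [hpt, ENNReal.toReal_one, hθdef]
      field_simp
      ring
    rwa [hexp] at h
  calc eLpNorm ψ 1 μ ≤ eLpNorm ψ p μ * μ Set.univ ^ θ := hstep1
    _ ≤ (ENNReal.ofReal K * eLpNorm φ p μ) * μ Set.univ ^ θ := by gcongr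
    _ ≤ (ENNReal.ofReal K *
          ((eLpNormEssSup φ μ)^θ *
            (L * (ENNReal.ofReal (B * lam ^ (-((n:ℝ)-1)/4)))^(-θ))))
        * μ Set.univ ^ θ := by
        gcongr
        exact hφp.trans (mul_le_mul_right hLsplit _)
    _ ≤ (ENNReal.ofReal K *
          ((ENNReal.ofReal (A * lam ^ (((n:ℝ)-1)/2)))^θ *
            (L * (ENNReal.ofReal (B * lam ^ (-((n:ℝ)-1)/4)))^(-θ))))
        * (ENNReal.ofReal V) ^ θ := by gcongr
    _ = ENNReal.ofReal (K * ((A * lam ^ (((n:ℝ)-1)/2))^θ *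
          (B * lam ^ (-((n:ℝ)-1)/4))^(-θ)) * V^θ) * L := by
        rw [ENNReal.ofReal_rpow_of_pos ha, ENNReal.ofReal_rpow_of_pos hb,
          ENNReal.ofReal_rpow_of_pos hV,
          ENNReal.ofReal_mul (mul_nonneg hK.le (by positivity)),
          ENNReal.ofReal_mul hK.le,
          ENNReal.ofReal_mul
            (by positivity : (0:ℝ) ≤ (A * lam ^ (((n:ℝ)-1)/2))^θ)]
        ring
    _ ≤ ENNReal.ofReal (V ^ θ * K * (A / B) ^ θ * lam ^ ε) * L := by
        refine mul_le_mul_left (ENNReal.ofReal_le_ofReal ?_) _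
        have hexp2 : ((n:ℝ)-1)/2*θ + ((n:ℝ)-1)/4*θ ≤ ε := by
          have : ((n:ℝ)-1)/2*θ + ((n:ℝ)-1)/4*θ = 3*((n:ℝ)-1)*δ/(4*(1+δ)) := by
            rw [hθdef]; field_simp; ring
          linarith
        have hlampow : lam ^ (((n:ℝ)-1)/2*θ + ((n:ℝ)-1)/4*θ) ≤ lam ^ ε :=
          Real.rpow_le_rpow_of_exponent_le hlam hexp2
        have heq : K * ((A * lam ^ (((n:ℝ)-1)/2))^θ *
            (B * lam ^ (-((n:ℝ)-1)/4))^(-θ)) * V^θ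
            = V ^ θ * K * (A / B) ^ θ *
              lam ^ (((n:ℝ)-1)/2*θ + ((n:ℝ)-1)/4*θ) := by
          rw [Real.mul_rpow hA.le (Real.rpow_nonneg hlam0.le _),
            Real.mul_rpow hB.le (Real.rpow_nonneg hlam0.le _),
            ← Real.rpow_mul hlam0.le, ← Real.rpow_mul hlam0.le,
            Real.rpow_add hlam0, Real.div_rpow hA.le hB.le,
            Real.rpow_neg hB.le]
          have : -((n:ℝ)-1)/4 * -θ = ((n:ℝ)-1)/4*θ := by ring
          rw [this]
          field_simp
        rw [heq]
        have h1 : (0:ℝ) ≤ V ^ θ * K * (A/B)^θ := by positivity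
        calc V ^ θ * K * (A / B) ^ θ * lam ^ (((n:ℝ)-1)/2*θ + ((n:ℝ)-1)/4*θ)
            ≤ V ^ θ * K * (A / B) ^ θ * lam ^ ε := by
              exact mul_le_mul_of_nonneg_left hlampow h1
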